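/- Let J : ℝ → Matrix (Fin 3) (Fin 3) ℝ be differentiable at t₀ with det(J(t₀)) ≠ 0, and define C(t) = (det J(t))⁻¹ • (J(t))ᵀ * J(t). Then C is differentiable at t₀ and its derivative satisfies C'(t₀) = − trace(J'(t₀) * (J(t₀))⁻¹) • C(t₀) + (det J(t₀))⁻¹ • ((J'(t₀))ᵀ * J(t₀)) + (det J(t₀))⁻¹ • ((J'(t₀))ᵀ * J(t₀))ᵀ, where J'(t₀) denotes the derivative of J at t₀. -/

import Mathlib

open Matrix

attribute [local instance] Matrix.normedAddCommGroup Matrix.normedSpace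

/-- Derivative of the stiffness deformation coefficient
`C(t) = (det J(t))⁻¹ • J(t)ᵀ * J(t)`. -/
theorem deriv_stiffness_coefficient
    (J : ℝ → Matrix (Fin 3) (Fin 3) ℝ) (J' : Matrix (Fin 3) (Fin 3) ℝ) (t₀ : ℝ)
    (hJ : HasDerivAt J J' t₀) (hdet : (J t₀).det ≠ 0)
    (C : ℝ → Matrix (Fin 3) (Fin 3) ℝ)
    (hC : ∀ t, C t = ((J t).det)⁻¹ • ((J t)ᵀ * J t)) :
    HasDerivAt C
      (-(Matrix.trace (J' * (J t₀)⁻¹)) • C t₀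
        + ((J t₀).det)⁻¹ • (J'ᵀ * J t₀)
        + ((J t₀).det)⁻¹ • (J'ᵀ * J t₀)ᵀ) t₀ := by
  -- entrywise derivatives of J
  have hE : ∀ i j : Fin 3, HasDerivAt (fun t => J t i j) (J' i j) t₀ := by
    intro i j
    exact hasDerivAt_pi.mp (hasDerivAt_pi.mp hJ i) j
  -- derivative of the determinant
  have hpoly : HasDerivAt (fun t =>
      J t 0 0 * J t 1 1 * J t 2 2 - J t 0 0 * J t 1 2 * J t 2 1
        - J t 0 1 * J t 1 0 * J t 2 2 + J t 0 1 * J t 1 2 * J t 2 0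
        + J t 0 2 * J t 1 0 * J t 2 1 - J t 0 2 * J t 1 1 * J t 2 0)
      ((J' 0 0 * J t₀ 1 1 + J t₀ 0 0 * J' 1 1) * J t₀ 2 2
          + J t₀ 0 0 * J t₀ 1 1 * J' 2 2
        - ((J' 0 0 * J t₀ 1 2 + J t₀ 0 0 * J' 1 2) * J t₀ 2 1
          + J t₀ 0 0 * J t₀ 1 2 * J' 2 1)
        - ((J' 0 1 * J t₀ 1 0 + J t₀ 0 1 * J' 1 0) * J t₀ 2 2
          + J t₀ 0 1 * J t₀ 1 0 * J' 2 2)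
        + ((J' 0 1 * J t₀ 1 2 + J t₀ 0 1 * J' 1 2) * J t₀ 2 0
          + J t₀ 0 1 * J t₀ 1 2 * J' 2 0)
        + ((J' 0 2 * J t₀ 1 0 + J t₀ 0 2 * J' 1 0) * J t₀ 2 1
          + J t₀ 0 2 * J t₀ 1 0 * J' 2 1)
        - ((J' 0 2 * J t₀ 1 1 + J t₀ 0 2 * J' 1 1) * J t₀ 2 0
          + J t₀ 0 2 * J t₀ 1 1 * J' 2 0)) t₀ :=
    (((((((hE 0 0).mul (hE 1 1)).mul (hE 2 2)).sub
        (((hE 0 0).mul (hE 1 2)).mul (hE 2 1))).sub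
        (((hE 0 1).mul (hE 1 0)).mul (hE 2 2))).add
        (((hE 0 1).mul (hE 1 2)).mul (hE 2 0))).add
        (((hE 0 2).mul (hE 1 0)).mul (hE 2 1))).sub
        (((hE 0 2).mul (hE 1 1)).mul (hE 2 0))
  have hdetD : HasDerivAt (fun t => (J t).det)
      (Matrix.trace (J' * (J t₀).adjugate)) t₀ := by
    have hfun : (fun t => (J t).det) = (fun t =>
        J t 0 0 * J t 1 1 * J t 2 2 - J t 0 0 * J t 1 2 * J t 2 1
          - J t 0 1 * J t 1 0 * J t 2 2 + J t 0 1 * J t 1 2 * J t 2 0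
          + J t 0 2 * J t 1 0 * J t 2 1 - J t 0 2 * J t 1 1 * J t 2 0) :=
      funext fun t => Matrix.det_fin_three _
    rw [hfun]
    convert hpoly using 1
    simp [Matrix.trace_fin_three, Matrix.adjugate_fin_three, Matrix.mul_apply,
      Fin.sum_univ_three]
    ring
  -- derivative of the inverse determinant
  have hinv : HasDerivAt (fun t => ((J t).det)⁻¹)
      (-(Matrix.trace (J' * (J t₀).adjugate)) / ((J t₀).det) ^ 2) t₀ :=
    hdetD.inv hdet
  -- now argue entrywise
  rw [show C = fun t => C t from rfl]
  apply hasDerivAt_pi.mpr; intro i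
  apply hasDerivAt_pi.mpr; intro j
  have hS : HasDerivAt (fun t => J t 0 i * J t 0 j + J t 1 i * J t 1 j + J t 2 i * J t 2 j)
      ((J' 0 i * J t₀ 0 j + J t₀ 0 i * J' 0 j)
        + (J' 1 i * J t₀ 1 j + J t₀ 1 i * J' 1 j)
        + (J' 2 i * J t₀ 2 j + J t₀ 2 i * J' 2 j)) t₀ :=
    (((hE 0 i).mul (hE 0 j)).add ((hE 1 i).mul (hE 1 j))).add ((hE 2 i).mul (hE 2 j))
  have hCfun : (fun t => C t i j) = (fun t =>
      ((J t).det)⁻¹ * (J t 0 i * J t 0 j + J t 1 i * J t 1 j + J t 2 i * J t 2 j)) := by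
    funext t
    rw [hC t]
    simp [Matrix.mul_apply, Matrix.transpose_apply, Fin.sum_univ_three]
  have hprod := hinv.mul hS
  have hgoal : HasDerivAt (fun t => C t i j)
      (-(Matrix.trace (J' * (J t₀).adjugate)) / ((J t₀).det) ^ 2
          * (J t₀ 0 i * J t₀ 0 j + J t₀ 1 i * J t₀ 1 j + J t₀ 2 i * J t₀ 2 j)
        + ((J t₀).det)⁻¹ * ((J' 0 i * J t₀ 0 j + J t₀ 0 i * J' 0 j)
            + (J' 1 i * J t₀ 1 j + J t₀ 1 i * J' 1 j)
            + (J' 2 i * J t₀ 2 j + J t₀ 2 i * J' 2 j))) t₀ := by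
    rw [hCfun]; exact hprod
  refine hgoal.congr_deriv ?_
  symm
  have hCval : C t₀ i j
      = ((J t₀).det)⁻¹ * (J t₀ 0 i * J t₀ 0 j + J t₀ 1 i * J t₀ 1 j + J t₀ 2 i * J t₀ 2 j) := by
    rw [hC t₀]
    simp [Matrix.mul_apply, Matrix.transpose_apply, Fin.sum_univ_three]
  have hInvDef : (J t₀)⁻¹ = ((J t₀).det)⁻¹ • (J t₀).adjugate := by rw [Matrix.inv_def, Ring.inverse_eq_inv]
  show (-(Matrix.trace (J' * (J t₀)⁻¹)) • C t₀
        + ((J t₀).det)⁻¹ • (J'ᵀ * J t₀)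
        + ((J t₀).det)⁻¹ • (J'ᵀ * J t₀)ᵀ) i j = _
  simp only [Matrix.add_apply, Matrix.smul_apply, Matrix.transpose_apply, smul_eq_mul,
    hInvDef, Matrix.mul_smul, Matrix.trace_smul, hCval]
  simp only [Matrix.mul_apply, Matrix.transpose_apply, Fin.sum_univ_three]
  field_simp
  ring
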